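/- Let λ ∈ ℝ and let μ be a nonzero λ-eigenmeasure of r̃+J̃. If the set Σ = {x ∈ S : r(x) = r̄} has positive Lebesgue measure, then λ > r̄, where r̄ = max_{x∈S} r(x). -/

import Mathlib

open MeasureTheory Filter Topology

/-- A finite positive Borel measure μ on S is a λ-eigenmeasure of the operator r̃+J̃ if for
every Borel set A ⊆ S one has ∫_A r dμ + ∫_A (∫_S K(y,x) μ(dy)) dx = λ μ(A). -/
def IsEigenmeasure {d : ℕ} (S : Set (EuclideanSpace ℝ (Fin d)))
    (r : EuclideanSpace ℝ (Fin d) → ℝ)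
    (K : EuclideanSpace ℝ (Fin d) → EuclideanSpace ℝ (Fin d) → ℝ)
    (lam : ℝ) (μ : MeasureTheory.Measure (EuclideanSpace ℝ (Fin d))) : Prop :=
  ∀ A : Set (EuclideanSpace ℝ (Fin d)), MeasurableSet A → A ⊆ S →
    (∫ x in A, r x ∂μ) + (∫ x in A, (∫ y in S, K y x ∂μ)) = lam * (μ A).toReal

/-- If the set Σ = {x ∈ S : r(x) = r̄} has positive Lebesgue measure, then every nonzero
λ-eigenmeasure of r̃+J̃ satisfies λ > r̄, where r̄ = max_S r. -/
theorem stmt7 {d : ℕ}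
    (Ω S : Set (EuclideanSpace ℝ (Fin d)))
    (hΩne : Ω.Nonempty) (hΩopen : IsOpen Ω) (hΩbdd : Bornology.IsBounded Ω)
    (hΩconn : IsConnected Ω) (hSdef : S = closure Ω)
    (hScomp : IsCompact S) (hSvol : 0 < volume S)
    (r : EuclideanSpace ℝ (Fin d) → ℝ) (hr : ContinuousOn r S)
    (hrpos : ∀ x ∈ S, 0 < r x)
    (K : EuclideanSpace ℝ (Fin d) → EuclideanSpace ℝ (Fin d) → ℝ)
    (hK : ContinuousOn (fun q : EuclideanSpace ℝ (Fin d) × EuclideanSpace ℝ (Fin d) =>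
      K q.1 q.2) (S ×ˢ S))
    (hKnn : ∀ x ∈ S, ∀ y ∈ S, 0 ≤ K x y)
    (ε₀ c₀ : ℝ) (hε₀ : 0 < ε₀) (hc₀ : 0 < c₀)
    (hKlb : ∀ x ∈ S, ∀ y ∈ S, dist y x < ε₀ → c₀ < K x y)
    (μ : Measure (EuclideanSpace ℝ (Fin d))) [IsFiniteMeasure μ]
    (hμne : μ ≠ 0) (hμS : μ Sᶜ = 0)
    (lam : ℝ) (hμ : IsEigenmeasure S r K lam μ)
    (rbar : ℝ) (hrbar : IsGreatest (r '' S) rbar)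
    (hSig : 0 < volume {x ∈ S | r x = rbar}) :
    rbar < lam := by
  have hSclosed : IsClosed S := hSdef ▸ isClosed_closure
  have hSmeas : MeasurableSet S := hSclosed.measurableSet
  have hΩS : Ω ⊆ S := hSdef ▸ subset_closure
  have hSne : S.Nonempty := hΩne.mono hΩS
  have hε2 : 0 < ε₀ / 2 := by linarith
  have hε4 : 0 < ε₀ / 4 := by linarith
  -- intersecting with S does not change μ-measure
  have hcompl : ∀ T : Set (EuclideanSpace ℝ (Fin d)), μ (T ∩ S) = μ T := by
    intro T
    refine le_antisymm (measure_mono Set.inter_subset_left) ?_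
    calc μ T ≤ μ (T ∩ S) + μ (T \ S) := measure_le_inter_add_diff μ T S
      _ ≤ μ (T ∩ S) + μ Sᶜ :=
          add_le_add le_rfl (measure_mono fun x hx => hx.2)
      _ = μ (T ∩ S) := by rw [hμS, add_zero]
  -- μ S > 0
  have hμSpos : 0 < μ S := by
    rcases (zero_le : 0 ≤ μ S).lt_or_eq with h | h
    · exact h
    · exfalso; apply hμne
      have : μ Set.univ = 0 := by
        have := measure_union_le (μ := μ) S Sᶜ
        rw [Set.union_compl_self, hμS, ← h] at this
        simpa using this
      exact Measure.measure_univ_eq_zero.mp this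
  -- bound on K
  obtain ⟨M, hM⟩ := (hScomp.prod hScomp).exists_bound_of_continuousOn hK
  -- continuity / integrability of sections
  have hsec1 : ∀ x ∈ S, ContinuousOn (fun y => K y x) S := fun x hx =>
    hK.comp (Continuous.continuousOn (continuous_id.prodMk continuous_const))
      (fun y hy => ⟨hy, hx⟩)
  have hKint : ∀ x ∈ S, IntegrableOn (fun y => K y x) S μ := by
    intro x hx
    refine Integrable.mono' (integrable_const M) (((hsec1 x hx).aestronglyMeasurable hSmeas)) ?_
    filter_upwards [ae_restrict_mem hSmeas] with y hy
    exact hM (y, x) ⟨hy, hx⟩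
  set J : EuclideanSpace ℝ (Fin d) → ℝ := fun x => ∫ y in S, K y x ∂μ with hJdef
  -- J continuous on S
  have hJcont : ContinuousOn J S := by
    apply continuousOn_of_dominated (bound := fun _ => M)
    · exact fun x hx => (hsec1 x hx).aestronglyMeasurable hSmeas
    · intro x hx
      filter_upwards [ae_restrict_mem hSmeas] with y hy
      exact hM (y, x) ⟨hy, hx⟩
    · exact integrable_const M
    · filter_upwards [ae_restrict_mem hSmeas] with y hy
      exact hK.comp (Continuous.continuousOn (continuous_const.prodMk continuous_id))
        (fun x hx => ⟨hy, hx⟩)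
  have hJnn : ∀ x ∈ S, 0 ≤ J x := fun x hx =>
    setIntegral_nonneg hSmeas fun y hy => hKnn y hy x hx
  have hJint : IntegrableOn J S := hJcont.integrableOn_compact hScomp
  -- lower bound for J from mass in a small ball
  have hJlow : ∀ (z : EuclideanSpace ℝ (Fin d)) (ρ : ℝ), 0 < ρ → ∀ x ∈ S,
      dist x z < ε₀ - ρ → c₀ * (μ (Metric.ball z ρ ∩ S)).toReal ≤ J x := by
    intro z ρ hρ x hx hdist
    set B : Set (EuclideanSpace ℝ (Fin d)) := Metric.ball z ρ ∩ S with hBdef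
    have hBmeas : MeasurableSet B := Metric.isOpen_ball.measurableSet.inter hSmeas
    have hBS : B ⊆ S := Set.inter_subset_right
    have step1 : ∫ y in B, (c₀ : ℝ) ∂μ ≤ ∫ y in B, K y x ∂μ := by
      apply setIntegral_mono_on ((integrableOn_const_iff).mpr (Or.inr (measure_lt_top μ B)))
        ((hKint x hx).mono_set hBS) hBmeas
      intro y hy
      have hd : dist x y < ε₀ := by
        have h1 : dist y z < ρ := Metric.mem_ball.mp hy.1
        calc dist x y ≤ dist x z + dist z y := dist_triangle _ _ _
          _ < (ε₀ - ρ) + ρ := by rw [dist_comm z y]; exact add_lt_add hdist h1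
          _ = ε₀ := by ring
      exact (hKlb y hy.2 x hx hd).le
    have step2 : ∫ y in B, K y x ∂μ ≤ J x := by
      apply setIntegral_mono_set (hKint x hx)
      · filter_upwards [ae_restrict_mem hSmeas] with y hy
        exact hKnn y hy x hx
      · exact HasSubset.Subset.eventuallyLE hBS
    have : ∫ y in B, (c₀ : ℝ) ∂μ = c₀ * (μ B).toReal := by
      rw [setIntegral_const, smul_eq_mul, mul_comm]; rfl
    linarith
  -- open subsets of Ω on which J is bounded below have positive μ-measure
  have hOpos : ∀ O : Set (EuclideanSpace ℝ (Fin d)), IsOpen O → O.Nonempty → O ⊆ Ω →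
      (∃ δ > 0, ∀ x ∈ O, δ ≤ J x) → 0 < μ O := by
    intro O hOopen hOne hOΩ ⟨δ, hδ, hδJ⟩
    have hOS : O ⊆ S := hOΩ.trans hΩS
    have hOmeas : MeasurableSet O := hOopen.measurableSet
    have key := hμ O hOmeas hOS
    have h1 : 0 ≤ ∫ x in O, r x ∂μ :=
      setIntegral_nonneg hOmeas fun x hx => (hrpos x (hOS hx)).le
    have hvolO : 0 < volume O := hOopen.measure_pos volume hOne
    have hvolOfin : volume O ≠ ⊤ :=
      (lt_of_le_of_lt (measure_mono hOS) hScomp.measure_lt_top).ne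
    have hb : 0 < (volume O).toReal := ENNReal.toReal_pos hvolO.ne' hvolOfin
    have h2 : δ * (volume O).toReal ≤ ∫ x in O, J x := by
      have : ∫ _ in O, (δ : ℝ) ≤ ∫ x in O, J x :=
        setIntegral_mono_on ((integrableOn_const_iff).mpr (Or.inr hvolOfin.lt_top))
          (hJint.mono_set hOS) hOmeas hδJ
      rwa [setIntegral_const, smul_eq_mul, mul_comm] at this
    rcases (zero_le : 0 ≤ μ O).lt_or_eq with h | h
    · exact h
    · exfalso
      rw [← h] at key
      simp only [ENNReal.toReal_zero, mul_zero] at key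
      nlinarith
  -- a point whose small ball carries μ-mass
  obtain ⟨y₀, hy₀S, hy₀⟩ : ∃ y₀ ∈ S, μ (Metric.ball y₀ (ε₀ / 4)) ≠ 0 := by
    by_contra h
    push_neg at h
    have hcov : S ⊆ ⋃ y ∈ S, Metric.ball y (ε₀ / 4) := fun x hx =>
      Set.mem_biUnion hx (Metric.mem_ball_self hε4)
    obtain ⟨t, htS, htfin, htcov⟩ := hScomp.elim_finite_subcover_image
      (fun y _ => Metric.isOpen_ball) hcov
    have : μ S = 0 := measure_mono_null htcov
      ((measure_biUnion_null_iff htfin.countable).mpr fun y hy => h y (htS hy))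
    exact hμSpos.ne' this
  -- the spreading lemma
  have hspread : ∀ z : EuclideanSpace ℝ (Fin d), 0 < μ (Metric.ball z (ε₀ / 2)) →
      ∀ x' ∈ Ω, dist x' z < ε₀ / 2 → 0 < μ (Metric.ball x' (ε₀ / 2)) := by
    intro z hz x' hx'Ω hx'z
    set O : Set (EuclideanSpace ℝ (Fin d)) :=
      Ω ∩ Metric.ball z (ε₀ / 2) ∩ Metric.ball x' (ε₀ / 2) with hOdef
    have hOopen : IsOpen O := (hΩopen.inter Metric.isOpen_ball).inter Metric.isOpen_ball
    have hOne : O.Nonempty := ⟨x', ⟨hx'Ω, Metric.mem_ball.mpr hx'z⟩, Metric.mem_ball_self hε2⟩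
    have hOΩ : O ⊆ Ω := fun x hx => hx.1.1
    have hδ : 0 < c₀ * (μ (Metric.ball z (ε₀ / 2) ∩ S)).toReal := by
      rw [hcompl]
      exact mul_pos hc₀ (ENNReal.toReal_pos hz.ne' (measure_ne_top μ _))
    have hμO : 0 < μ O := by
      refine hOpos O hOopen hOne hOΩ ⟨_, hδ, ?_⟩
      intro x hx
      refine hJlow z (ε₀ / 2) hε2 x (hΩS hx.1.1) ?_
      have := Metric.mem_ball.mp hx.1.2
      linarith [this]
    exact lt_of_lt_of_le hμO (measure_mono fun x hx => hx.2)
  -- every point of Ω has positive mass in its ε₀/2-ball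
  have hV : ∀ x ∈ Ω, 0 < μ (Metric.ball x (ε₀ / 2)) := by
    set V : Set (EuclideanSpace ℝ (Fin d)) := {x | x ∈ Ω ∧ 0 < μ (Metric.ball x (ε₀ / 2))}
      with hVdef
    have hVne : V.Nonempty := by
      have : y₀ ∈ closure Ω := hSdef ▸ hy₀S
      rcases Metric.mem_closure_iff.mp this (ε₀ / 4) hε4 with ⟨x', hx'Ω, hx'⟩
      refine ⟨x', hx'Ω, ?_⟩
      refine lt_of_lt_of_le (pos_iff_ne_zero.mpr hy₀) (measure_mono ?_)
      intro y hy
      have h1 : dist y y₀ < ε₀ / 4 := Metric.mem_ball.mp hy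
      have h2 : dist x' y₀ < ε₀ / 4 := by rwa [dist_comm] at hx'
      refine Metric.mem_ball.mpr ?_
      calc dist y x' ≤ dist y y₀ + dist y₀ x' := dist_triangle _ _ _
        _ < ε₀ / 4 + ε₀ / 4 := add_lt_add h1 (by rwa [dist_comm] at h2)
        _ = ε₀ / 2 := by ring
    set U : Set (EuclideanSpace ℝ (Fin d)) := ⋃ x ∈ V, Metric.ball x (ε₀ / 2) with hUdef
    set U' : Set (EuclideanSpace ℝ (Fin d)) := ⋃ x ∈ Ω \ V, Metric.ball x (ε₀ / 2)
      with hU'def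
    have hUopen : IsOpen U := isOpen_biUnion fun _ _ => Metric.isOpen_ball
    have hU'open : IsOpen U' := isOpen_biUnion fun _ _ => Metric.isOpen_ball
    have hcover : Ω ⊆ U ∪ U' := by
      intro x hx
      by_cases hxV : x ∈ V
      · exact Or.inl (Set.mem_biUnion hxV (Metric.mem_ball_self hε2))
      · exact Or.inr (Set.mem_biUnion ⟨hx, hxV⟩ (Metric.mem_ball_self hε2))
    have hUne : (Ω ∩ U).Nonempty := by
      rcases hVne with ⟨x, hxΩ, hxμ⟩
      exact ⟨x, hxΩ, Set.mem_biUnion ⟨hxΩ, hxμ⟩ (Metric.mem_ball_self hε2)⟩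
    by_contra hcon
    push_neg at hcon
    obtain ⟨x₂, hx₂Ω, hx₂μ⟩ : (Ω \ V).Nonempty := by
      rcases hcon with ⟨x, hxΩ, hxμ⟩
      exact ⟨x, hxΩ, fun hxV => (not_lt.mpr hxμ) hxV.2⟩
    have hU'ne : (Ω ∩ U').Nonempty :=
      ⟨x₂, hx₂Ω, Set.mem_biUnion ⟨hx₂Ω, hx₂μ⟩ (Metric.mem_ball_self hε2)⟩
    obtain ⟨w, hwΩ, hwU, hwU'⟩ := hΩconn.isPreconnected U U' hUopen hU'open hcover hUne hU'ne
    rcases Set.mem_iUnion₂.mp hwU with ⟨x₁, hx₁V, hwx₁⟩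
    rcases Set.mem_iUnion₂.mp hwU' with ⟨x₃, hx₃, hwx₃⟩
    have hwV : 0 < μ (Metric.ball w (ε₀ / 2)) :=
      hspread x₁ hx₁V.2 w hwΩ (Metric.mem_ball.mp hwx₁)
    have : 0 < μ (Metric.ball x₃ (ε₀ / 2)) := by
      refine hspread w hwV x₃ hx₃.1 ?_
      have := Metric.mem_ball.mp hwx₃
      rwa [dist_comm]
    exact hx₃.2 ⟨hx₃.1, this⟩
  -- J is positive everywhere on S
  have hJpos : ∀ x ∈ S, 0 < J x := by
    intro x hx
    have hxcl : x ∈ closure Ω := hSdef ▸ hx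
    rcases Metric.mem_closure_iff.mp hxcl (ε₀ / 2) hε2 with ⟨x', hx'Ω, hx'⟩
    have h1 : 0 < μ (Metric.ball x' (ε₀ / 2) ∩ S) := by
      rw [hcompl]; exact hV x' hx'Ω
    refine lt_of_lt_of_le (mul_pos hc₀ (ENNReal.toReal_pos h1.ne' (measure_ne_top μ _)))
      (hJlow x' (ε₀ / 2) hε2 x hx ?_)
    linarith [hx']
  -- minimum of J on S
  obtain ⟨xm, hxmS, hxmmin⟩ := hScomp.exists_isMinOn hSne hJcont
  set δ : ℝ := J xm with hδdef
  have hδpos : 0 < δ := hJpos xm hxmS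
  -- the set Σ
  set Sig : Set (EuclideanSpace ℝ (Fin d)) := {x | x ∈ S ∧ r x = rbar} with hSigDef
  have hSig2eq : Sig = S ∩ r ⁻¹' {rbar} := by
    ext x; simp [hSigDef, Set.mem_preimage]
  have hSig2closed : IsClosed Sig := by
    rw [hSig2eq]
    exact hr.preimage_isClosed_of_isClosed hSclosed isClosed_singleton
  have hSig2meas : MeasurableSet Sig := hSig2closed.measurableSet
  have hSig2S : Sig ⊆ S := fun x hx => hx.1
  have key := hμ Sig hSig2meas hSig2S
  have hr_eq : ∫ x in Sig, r x ∂μ = rbar * (μ Sig).toReal := by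
    rw [setIntegral_congr_fun hSig2meas (g := fun _ => rbar) (fun x hx => hx.2),
      setIntegral_const, smul_eq_mul, mul_comm]; rfl
  have hvolSigfin : volume Sig ≠ ⊤ :=
    (lt_of_le_of_lt (measure_mono hSig2S) hScomp.measure_lt_top).ne
  have hJSig : δ * (volume Sig).toReal ≤ ∫ x in Sig, J x := by
    have : ∫ _ in Sig, (δ : ℝ) ≤ ∫ x in Sig, J x :=
      setIntegral_mono_on ((integrableOn_const_iff).mpr (Or.inr hvolSigfin.lt_top))
        (hJint.mono_set hSig2S) hSig2meas (fun x hx => hxmmin (hSig2S hx))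
    rwa [setIntegral_const, smul_eq_mul, mul_comm] at this
  have hvolSigpos : 0 < (volume Sig).toReal := ENNReal.toReal_pos hSig.ne' hvolSigfin
  have hp : 0 < integral (volume.restrict Sig) J :=
    lt_of_lt_of_le (by positivity) hJSig
  rw [hr_eq] at key
  have ht : 0 < (μ Sig).toReal := by
    rcases ((ENNReal.toReal_nonneg (a := μ Sig)).lt_or_eq) with h | h
    · exact h
    · exfalso
      rw [← h] at key
      simp only [mul_zero, zero_add] at key
      linarith
  have hlt : rbar * (μ Sig).toReal < lam * (μ Sig).toReal := by linarith
  exact lt_of_mul_lt_mul_right hlt ht.le
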